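/- arXiv:2306.01614 — 2 statements merged into one kernel-verified Lean document; each statement's English description precedes it below -/
import Mathlib

section
/- Pomset substitution satisfies the associativity monad law: for a pomset P over X and maps g : X → Pomset(Y), h : Y → Pomset(Z), the pomsets (P ⟫ g) ⟫ h and P ⟫ (λx. g(x) ⟫ h) are isomorphic. -/
universe u v w

/-- A pomset over `X`: a carrier set of events with an order relation and a
labelling into `X`. -/
structure Pomset (X : Type u) : Type (u + 1) where
  E : Type
  le : E → E → Prop
  lab : E → X

/-- The order of a pomset is a partial order. -/
def Pomset.IsPO {X : Type u} (P : Pomset X) : Prop :=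
  (∀ a, P.le a a) ∧ (∀ a b, P.le a b → P.le b a → a = b) ∧
  (∀ a b c, P.le a b → P.le b c → P.le a c)

/-- Isomorphism of pomsets: a label-preserving order-isomorphism. -/
def PomIso {X : Type u} (P Q : Pomset X) : Prop :=
  ∃ f : P.E ≃ Q.E, (∀ a b, P.le a b ↔ Q.le (f a) (f b)) ∧ ∀ e, Q.lab (f e) = P.lab e

/-- Pomset substitution: replace each event `e` of `P` by the pomset `g (P.lab e)`,
with the lexicographic order: `(e1,f1) ≤ (e2,f2)` iff `e1 < e2`, or `e1 = e2` and
`f1 ≤ f2` in the inner pomset. -/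
def Pomset.bind {X : Type u} {Y : Type v} (P : Pomset X) (g : X → Pomset Y) :
    Pomset Y where
  E := Σ e : P.E, (g (P.lab e)).E
  le a b := (P.le a.1 b.1 ∧ a.1 ≠ b.1) ∨
    ∃ h : a.1 = b.1, (g (P.lab b.1)).le (h ▸ a.2) b.2
  lab a := (g (P.lab a.1)).lab a.2

/-- pomset substitution satisfies the associativity monad law. -/
theorem Pomset.bind_assoc {X : Type u} {Y : Type v} {Z : Type w}
    (P : Pomset X) (g : X → Pomset Y) (h : Y → Pomset Z) :
    PomIso ((P.bind g).bind h) (P.bind fun x => (g x).bind h) := by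
  refine ⟨⟨fun a => ⟨a.1.1, a.1.2, a.2⟩, fun b => ⟨⟨b.1, b.2.1⟩, b.2.2⟩,
    fun a => rfl, fun b => rfl⟩, ?_, fun e => rfl⟩
  rintro ⟨⟨e1, f1⟩, k1⟩ ⟨⟨e2, f2⟩, k2⟩
  simp only [Pomset.bind, Equiv.coe_fn_mk]
  by_cases he : e1 = e2
  · subst he
    by_cases hf : f1 = f2
    · subst hf
      have hne : ¬ (⟨e1, f1⟩ : Σ e : P.E, (g (P.lab e)).E) ≠ ⟨e1, f1⟩ := fun H => H rfl
      constructor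
      · rintro (⟨_, H⟩ | ⟨H, hle⟩)
        · exact absurd rfl H
        · right
          refine ⟨rfl, Or.inr ⟨rfl, ?_⟩⟩
          have : H = rfl := rfl
          rw [this] at hle
          exact hle
      · rintro (⟨_, H⟩ | ⟨H, (⟨_, H2⟩ | ⟨H2, hle⟩)⟩)
        · exact absurd rfl H
        · exact absurd rfl H2
        · right
          refine ⟨rfl, ?_⟩
          have : H2 = rfl := rfl
          rw [this] at hle
          exact hle
    · have hpairne : (⟨e1, f1⟩ : Σ e : P.E, (g (P.lab e)).E) ≠ ⟨e1, f2⟩ := by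
        intro H
        exact hf (eq_of_heq (Sigma.mk.inj_iff.mp H).2)
      constructor
      · rintro (⟨(⟨_, H⟩ | ⟨H, hle⟩), _⟩ | ⟨H, _⟩)
        · exact absurd rfl H
        · right
          refine ⟨rfl, Or.inl ⟨?_, hf⟩⟩
          have : H = rfl := rfl
          rw [this] at hle
          exact hle
        · exact absurd H hpairne
      · rintro (⟨_, H⟩ | ⟨H, (⟨hle, _⟩ | ⟨H2, _⟩)⟩)
        · exact absurd rfl H
        · left
          exact ⟨Or.inr ⟨rfl, hle⟩, hpairne⟩
        · have : H = rfl := rfl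
          rw [this] at H2
          exact absurd H2 hf
  · have hpairne : (⟨e1, f1⟩ : Σ e : P.E, (g (P.lab e)).E) ≠ ⟨e2, f2⟩ := by
      intro H
      exact he (congrArg (fun p => p.1) H)
    constructor
    · rintro (⟨(⟨hle, _⟩ | ⟨H, _⟩), _⟩ | ⟨H, _⟩)
      · exact Or.inl ⟨hle, he⟩
      · exact absurd H he
      · exact absurd H hpairne
    · rintro (⟨hle, _⟩ | ⟨H, _⟩)
      · exact Or.inl ⟨Or.inl ⟨hle, he⟩, hpairne⟩
      · exact absurd H he
end

section
/- If G' ∈ G ⟫ I for plain executions G (of library L) and G' (of collection Λ) and implementation I of L over Λ, then there exists a plain matching f : G'.E → G.E, i.e., a surjection such that G.po = ∃f(G'.po) and for every event e of G, the restriction of G' to f⁻¹(e) belongs to I(label(e)). -/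
universe u v

/-- Pomset substitution (strict-order version): replace each event `e` of `P` by
the pomset `g (P.lab e)`, ordered lexicographically. -/
def Pomset.bindS {X : Type u} {Y : Type v} (P : Pomset X) (g : X → Pomset Y) :
    Pomset Y where
  E := Σ e : P.E, (g (P.lab e)).E
  le a b := P.le a.1 b.1 ∨ ∃ h : a.1 = b.1, (g (P.lab b.1)).le (h ▸ a.2) b.2
  lab a := (g (P.lab a.1)).lab a.2

/-- Restriction of a pomset to a subset of its events. -/
def Pomset.restrict {X : Type u} (P : Pomset X) (s : Set P.E) : Pomset X :=
  ⟨{ x // x ∈ s }, fun a b => P.le a.1 b.1, fun a => P.lab a.1⟩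

/-- The substitution `G ⟫ I` of an implementation `I` (mapping labels to sets of
pomsets) into the plain execution `G`: each event is replaced by some pomset chosen
from `I` applied to its label. -/
def substOne {X Y : Type} (G : Pomset X) (I : X → Set (Pomset Y)) :
    Set (Pomset Y) :=
  { Q | ∃ lab' : G.E → Pomset Y,
      (∀ e, lab' e ∈ I (G.lab e)) ∧ Q = Pomset.bindS ⟨G.E, G.le, lab'⟩ id }

/-- Transport of a relation along a map. -/
def eproj {X Y : Type} (f : X → Y) (r : X → X → Prop) : Y → Y → Prop :=
  fun y1 y2 => y1 ≠ y2 ∧ ∃ x1 x2, f x1 = y1 ∧ f x2 = y2 ∧ r x1 x2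

/-- if `G' ∈ G ⟫ I` (with `G` a plain execution whose order is
irreflexive and all pomsets provided by `I` nonempty), then there exists a plain
matching `f : G'.E → G.E`: a surjection such that `G.po = ∃f(G'.po)` and, for every
event `e` of `G`, the restriction of `G'` to `f⁻¹(e)` belongs (up to isomorphism)
to `I (label e)`. -/
theorem exists_plain_matching {X Y : Type}
    (G : Pomset X) (I : X → Set (Pomset Y))
    (hirr : ∀ a, ¬ G.le a a)
    (hne : ∀ (x : X) (P : Pomset Y), P ∈ I x → Nonempty P.E)
    (G' : Pomset Y) (hG' : G' ∈ substOne G I) :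
    ∃ f : G'.E → G.E,
      Function.Surjective f ∧
      G.le = eproj f G'.le ∧
      ∀ e : G.E, ∃ R ∈ I (G.lab e), PomIso (G'.restrict { a | f a = e }) R := by

  obtain ⟨lab', hmem, rfl⟩ := hG'
  refine ⟨fun a => a.1, ?_, ?_, ?_⟩
  · intro e
    obtain ⟨y⟩ := hne _ _ (hmem e)
    exact ⟨⟨e, y⟩, rfl⟩
  · funext a b
    apply propext
    constructor
    · intro hab
      have hnab : a ≠ b := fun h => hirr a (h ▸ hab)
      obtain ⟨x⟩ := hne _ _ (hmem a)
      obtain ⟨y⟩ := hne _ _ (hmem b)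
      exact ⟨hnab, ⟨a, x⟩, ⟨b, y⟩, rfl, rfl, Or.inl hab⟩
    · rintro ⟨hnab, ⟨a', x⟩, ⟨b', y⟩, rfl, rfl, hle | ⟨h, _⟩⟩
      · exact hle
      · exact absurd h hnab
  · intro e
    refine ⟨lab' e, hmem e, ?_⟩
    refine ⟨⟨fun a => a.2 ▸ a.1.2, fun y => ⟨⟨e, y⟩, rfl⟩, ?_, fun y => rfl⟩, ?_, ?_⟩
    · rintro ⟨⟨e', y⟩, h⟩
      dsimp at h; subst h; rfl
    · rintro ⟨⟨a, x⟩, ha⟩ ⟨⟨b, y⟩, hb⟩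
      dsimp at ha hb; subst ha; dsimp only at hb; subst hb
      constructor
      · rintro (h | ⟨h, hle⟩)
        · exact absurd h (hirr _)
        · exact hle
      · intro h
        exact Or.inr ⟨rfl, h⟩
    · rintro ⟨⟨a, x⟩, ha⟩
      dsimp at ha; subst ha; rfl
end
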